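/- arXiv:quant-ph/0609237 — 3 statements merged into one kernel-verified Lean document; each statement's English description precedes it below -/
import Mathlib

section
/- Let ρ_AB = Σ_x p_x |x⟩⟨x| ⊗ ρ_x be a classical-quantum state with marginal ρ = Σ_x p_x ρ_x invertible, and define H₂(ρ_AB|ρ) = -log₂ Tr(((I ⊗ ρ^{-1/2}) ρ_AB)²). Then Tr(((I ⊗ ρ^{-1/2}) ρ_AB)²) = Σ_x p_x² Tr(ρ^{-1/2} ρ_x ρ^{-1/2} ρ_x). Consequently, the maximal average probability of correctly guessing x from ρ_x (supremum over all POVMs) is at least 2^{-H₂(ρ_AB|ρ)}. -/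
open Matrix BigOperators ComplexOrder Kronecker

private lemma smul_psd {n : Type*} [Fintype n] {c : ℝ} (hc : 0 ≤ c)
    {A : Matrix n n ℂ} (hA : A.PosSemidef) : ((c : ℂ) • A).PosSemidef := by
  refine ⟨?_, fun x => ?_⟩
  · unfold Matrix.IsHermitian
    rw [Matrix.conjTranspose_smul, hA.1]
    congr 1
    simp [Complex.conj_ofReal]
  · have h := mul_nonneg (by exact_mod_cast hc : (0:ℂ) ≤ c) (hA.2 x)
    simp only [Finsupp.mul_sum, Matrix.smul_apply, smul_eq_mul] at h ⊢
    refine le_of_le_of_eq h ?_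
    congr 1; ext i xi; congr 1; ext j xj; ring

open scoped MatrixOrder in
noncomputable def Matrix.PosSemidef.sqrt {n : Type*} [Fintype n] [DecidableEq n]
    {A : Matrix n n ℂ} (_hA : A.PosSemidef) : Matrix n n ℂ := CFC.sqrt A

open scoped MatrixOrder in
lemma Matrix.PosSemidef.sqrt_mul_self {n : Type*} [Fintype n] [DecidableEq n]
    {A : Matrix n n ℂ} (hA : A.PosSemidef) : hA.sqrt * hA.sqrt = A :=
  CFC.sqrt_mul_sqrt_self A hA.nonneg

open scoped MatrixOrder in
lemma Matrix.PosSemidef.posSemidef_sqrt {n : Type*} [Fintype n] [DecidableEq n]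
    {A : Matrix n n ℂ} (hA : A.PosSemidef) : hA.sqrt.PosSemidef :=
  (CFC.sqrt_nonneg A).posSemidef

private lemma re_trace_AhA {n : Type*} [Fintype n] (A : Matrix n n ℂ) :
    ((Aᴴ * A).trace).re = ∑ j, ∑ i, Complex.normSq (A i j) := by
  simp only [Matrix.trace, Matrix.diag, Matrix.mul_apply, Matrix.conjTranspose_apply]
  rw [Complex.re_sum]
  refine Finset.sum_congr rfl fun j _ => ?_
  rw [Complex.re_sum]
  refine Finset.sum_congr rfl fun i _ => ?_
  simp [Complex.mul_re, Complex.normSq_apply]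

private lemma re_trace_AhA_nonneg {n : Type*} [Fintype n] (A : Matrix n n ℂ) :
    0 ≤ ((Aᴴ * A).trace).re := by
  rw [re_trace_AhA]
  exact Finset.sum_nonneg fun j _ => Finset.sum_nonneg fun i _ => Complex.normSq_nonneg _

private lemma re_trace_AhA_pos {n : Type*} [Fintype n] {A : Matrix n n ℂ} (h : A ≠ 0) :
    0 < ((Aᴴ * A).trace).re := by
  rw [re_trace_AhA]
  obtain ⟨i, j, hij⟩ : ∃ i j, A i j ≠ 0 := by
    by_contra h'
    push_neg at h'
    exact h (Matrix.ext fun i j => h' i j)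
  refine Finset.sum_pos' (fun j _ => Finset.sum_nonneg fun i _ => Complex.normSq_nonneg _)
    ⟨j, Finset.mem_univ j, Finset.sum_pos'
      (fun i _ => Complex.normSq_nonneg _)
      ⟨i, Finset.mem_univ i, Complex.normSq_pos.mpr hij⟩⟩

/-- For the cq-state `ρ_AB = ∑_x p_x |x⟩⟨x| ⊗ ρ_x` with invertible marginal `ρ`,
`Tr(((I ⊗ ρ^{-1/2}) ρ_AB)²) = ∑_x p_x² Tr(ρ^{-1/2} ρ_x ρ^{-1/2} ρ_x)`, and the maximal
average guessing probability over POVMs is at least `2^{-H₂(ρ_AB|ρ)}`. -/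
theorem h2_guessing_lemma {X d : Type*} [Fintype X] [DecidableEq X] [Fintype d] [DecidableEq d]
    (p : X → ℝ) (hp : ∀ x, 0 ≤ p x) (hpsum : ∑ x, p x = 1)
    (ρ : X → Matrix d d ℂ) (hρ : ∀ x, (ρ x).PosSemidef) (hρtr : ∀ x, (ρ x).trace = 1)
    (ρbar : Matrix d d ℂ) (hρbar : ρbar = ∑ x, (p x : ℂ) • ρ x)
    (hpd : ρbar.PosDef)
    (R : Matrix d d ℂ) (hR : R.PosSemidef) (hRR : R * R = ρbar⁻¹)
    (ρAB : Matrix (X × d) (X × d) ℂ)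
    (hρAB : ρAB = ∑ x, (p x : ℂ) • ((Matrix.single x x 1) ⊗ₖ ρ x)) :
    (((((1 : Matrix X X ℂ) ⊗ₖ R) * ρAB) * (((1 : Matrix X X ℂ) ⊗ₖ R) * ρAB)).trace
        = ∑ x, (p x : ℂ) ^ 2 * (R * ρ x * R * ρ x).trace) ∧
    ∃ M : X → Matrix d d ℂ, (∀ x, (M x).PosSemidef) ∧ (∑ x, M x = (1 : Matrix d d ℂ)) ∧
      (2 : ℝ) ^ (-(-Real.logb 2
          ((((((1 : Matrix X X ℂ) ⊗ₖ R) * ρAB) * (((1 : Matrix X X ℂ) ⊗ₖ R) * ρAB)).trace).re)))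
        ≤ ∑ x, p x * ((M x * ρ x).trace).re := by
  -- invertibility facts
  have hdet : IsUnit ρbar.det := hpd.det_pos.ne'.isUnit
  have hinv : ρbar⁻¹ * ρbar = 1 := Matrix.nonsing_inv_mul ρbar hdet
  have hinv' : ρbar * ρbar⁻¹ = 1 := Matrix.mul_nonsing_inv ρbar hdet
  -- R commutes with ρbar⁻¹
  have swap : ρbar⁻¹ * R = R * ρbar⁻¹ := by
    rw [← hRR]; exact mul_assoc R R R
  have e1 : ρbar * (ρbar⁻¹ * R) * ρbar = R * ρbar := by
    rw [← mul_assoc, hinv', one_mul]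
  have e2 : ρbar * (R * ρbar⁻¹) * ρbar = ρbar * R := by
    rw [mul_assoc ρbar (R * ρbar⁻¹) ρbar, mul_assoc R ρbar⁻¹ ρbar, hinv, mul_one]
  have hcomm : R * ρbar = ρbar * R := by
    rw [← e1, swap, e2]
  have hRone : R * ρbar * R = 1 := by
    rw [hcomm, mul_assoc, hRR, hinv']
  -- Part 1 : the trace identity
  have key : (((((1 : Matrix X X ℂ) ⊗ₖ R) * ρAB) * (((1 : Matrix X X ℂ) ⊗ₖ R) * ρAB)).trace
      = ∑ x, (p x : ℂ) ^ 2 * (R * ρ x * R * ρ x).trace) := by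
    have hA1 : ((1 : Matrix X X ℂ) ⊗ₖ R) * ρAB
        = ∑ x, (p x : ℂ) • ((Matrix.single x x (1 : ℂ)) ⊗ₖ (R * ρ x)) := by
      rw [hρAB, Finset.mul_sum]
      refine Finset.sum_congr rfl fun x _ => ?_
      rw [Matrix.mul_smul, ← Matrix.mul_kronecker_mul, one_mul]
    rw [hA1, Finset.sum_mul_sum, Matrix.trace_sum]
    refine Finset.sum_congr rfl fun x _ => ?_
    rw [Matrix.trace_sum, Finset.sum_eq_single x]
    · rw [Matrix.smul_mul, Matrix.mul_smul, ← Matrix.mul_kronecker_mul,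
        Matrix.single_mul_single_same, one_mul, Matrix.trace_smul, Matrix.trace_smul,
        Matrix.trace_kronecker]
      have htrE : (Matrix.single x x (1 : ℂ)).trace = 1 := by
        simp [Matrix.trace, Matrix.diag, Matrix.single]
      rw [htrE, one_mul, smul_eq_mul, smul_eq_mul,
        ← Matrix.mul_assoc (R * ρ x) R (ρ x)]
      ring
    · intro y _ hyx
      rw [Matrix.smul_mul, Matrix.mul_smul, ← Matrix.mul_kronecker_mul,
        Matrix.single_mul_single_of_ne (h := Ne.symm hyx), Matrix.zero_kronecker,
        smul_zero, smul_zero, Matrix.trace_zero]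
    · intro hx
      exact absurd (Finset.mem_univ x) hx
  refine ⟨key, fun x => (p x : ℂ) • (R * ρ x * R), fun x => ?_, ?_, ?_⟩
  · -- PSD of each POVM element
    refine smul_psd (hp x) ?_
    have := (hρ x).mul_mul_conjTranspose_same R
    rwa [hR.1] at this
  · -- sum to identity
    have h2 : R * ρbar * R = ∑ x, (p x : ℂ) • (R * ρ x * R) := by
      rw [hρbar, Finset.mul_sum, Finset.sum_mul]
      exact Finset.sum_congr rfl fun x _ => by rw [Matrix.mul_smul, Matrix.smul_mul]
    rw [← h2, hRone]
  · -- the guessing probability bound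
    set T : ℂ := ((((1 : Matrix X X ℂ) ⊗ₖ R) * ρAB) * (((1 : Matrix X X ℂ) ⊗ₖ R) * ρAB)).trace
      with hT
    have hTre : T.re = ∑ x, p x ^ 2 * ((R * ρ x * R * ρ x).trace).re := by
      rw [key, Complex.re_sum]
      refine Finset.sum_congr rfl fun x _ => ?_
      have : ((p x : ℂ)) ^ 2 = ((p x ^ 2 : ℝ) : ℂ) := by push_cast; ring
      rw [this, Complex.re_ofReal_mul]
    -- each trace term is Tr(AᴴA) for A = S R S, S = sqrt (ρ x)
    have hform : ∀ x, (R * ρ x * R * ρ x).trace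
        = (((hρ x).sqrt * R * (hρ x).sqrt)ᴴ * ((hρ x).sqrt * R * (hρ x).sqrt)).trace := by
      intro x
      set S := (hρ x).sqrt with hSdef
      have hS : S * S = ρ x := (hρ x).sqrt_mul_self
      have hSH : Sᴴ = S := (hρ x).posSemidef_sqrt.1
      have hAH : (S * R * S)ᴴ = S * R * S := by
        simp [Matrix.conjTranspose_mul, hSH, hR.1.eq, mul_assoc]
      rw [hAH, ← hS]
      rw [show (S * R * S) * (S * R * S) = S * (R * (S * S) * (R * S)) by
        simp only [Matrix.mul_assoc]]
      conv_rhs => rw [Matrix.trace_mul_comm]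
      congr 1
      simp only [Matrix.mul_assoc]
    have hnonneg : ∀ x, 0 ≤ ((R * ρ x * R * ρ x).trace).re := by
      intro x
      rw [hform x]
      exact re_trace_AhA_nonneg _
    -- R has nonzero determinant, hence so does its square root
    have hdRR : R.det * R.det = ρbar.det⁻¹ := by
      rw [← Matrix.det_mul, hRR, Matrix.det_nonsing_inv, Ring.inverse_eq_inv]
    have hdetR : R.det ≠ 0 := by
      intro h
      rw [h, mul_zero] at hdRR
      exact (inv_ne_zero hpd.det_pos.ne') hdRR.symm
    have hdetsR : (hR.sqrt).det ≠ 0 := by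
      intro h
      have := hR.sqrt_mul_self
      apply hdetR
      rw [← this, Matrix.det_mul, h, mul_zero]
    -- positivity at a point with p x > 0
    obtain ⟨x0, hx0⟩ : ∃ x, 0 < p x := by
      by_contra h'
      push_neg at h'
      have : ∑ x, p x = 0 :=
        Finset.sum_eq_zero fun x _ => le_antisymm (h' x) (hp x)
      rw [hpsum] at this; norm_num at this
    have hA0 : (hρ x0).sqrt * R * (hρ x0).sqrt ≠ 0 := by
      intro h
      set S := (hρ x0).sqrt with hSdef
      have hS : S * S = ρ x0 := (hρ x0).sqrt_mul_self
      have hSH : Sᴴ = S := (hρ x0).posSemidef_sqrt.1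
      have hB : (hR.sqrt * S)ᴴ * (hR.sqrt * S) = S * R * S := by
        rw [Matrix.conjTranspose_mul, hSH, hR.posSemidef_sqrt.1]
        rw [show S * hR.sqrt * (hR.sqrt * S) = S * (hR.sqrt * hR.sqrt) * S by
          simp only [Matrix.mul_assoc], hR.sqrt_mul_self]
      rw [← hB, Matrix.conjTranspose_mul_self_eq_zero] at h
      have hSzero : S = 0 := by
        have h1 : hR.sqrt⁻¹ * (hR.sqrt * S) = 0 := by rw [h, Matrix.mul_zero]
        rwa [← Matrix.mul_assoc, Matrix.nonsing_inv_mul _ hdetsR.isUnit, Matrix.one_mul] at h1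
      have hz : ρ x0 = 0 := by rw [← hS, hSzero, Matrix.mul_zero]
      have h0 : (ρ x0).trace = 0 := by rw [hz, Matrix.trace_zero]
      rw [hρtr x0] at h0
      norm_num at h0
    have hpos : 0 < T.re := by
      rw [hTre]
      refine Finset.sum_pos' (fun x _ => mul_nonneg (sq_nonneg _) (hnonneg x))
        ⟨x0, Finset.mem_univ x0, mul_pos (pow_pos hx0 2) ?_⟩
      rw [hform x0]
      exact re_trace_AhA_pos hA0
    have hRHS : ∑ x, p x * ((((p x : ℂ) • (R * ρ x * R)) * ρ x).trace).re = T.re := by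
      rw [hTre]
      refine Finset.sum_congr rfl fun x _ => ?_
      rw [Matrix.smul_mul, Matrix.trace_smul, smul_eq_mul, Complex.re_ofReal_mul]
      ring
    rw [neg_neg, Real.rpow_logb two_pos (by norm_num) hpos]
    exact le_of_eq hRHS.symm
end

section
/- If the uniform ensemble {2^{-n}, ρ_x} over n-bit strings satisfies Σ_x p^B_{x|x} ≤ 2^b for every POVM (where p^B_{x|x} is the probability of correctly identifying x), then ξ(E) := n − H₂(ρ_AB|ρ) ≤ b. -/
open Matrix BigOperators ComplexOrder Kronecker

private lemma trace_re_eq_sum_normSq {d e : Type*} [Fintype d] [Fintype e]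
    (A : Matrix d e ℂ) : ((Aᴴ * A).trace).re = ∑ j, ∑ i, Complex.normSq (A i j) := by
  have h : (Aᴴ * A).trace = ∑ j, ∑ i, (Complex.normSq (A i j) : ℂ) := by
    simp [Matrix.trace, Matrix.mul_apply, Matrix.diag, Matrix.conjTranspose_apply,
      Complex.normSq_eq_conj_mul_self]
  rw [h]
  simp [Complex.re_sum]

private lemma trace_re_nonneg {d e : Type*} [Fintype d] [Fintype e]
    (A : Matrix d e ℂ) : 0 ≤ ((Aᴴ * A).trace).re := by
  rw [trace_re_eq_sum_normSq]
  exact Finset.sum_nonneg fun j _ => Finset.sum_nonneg fun i _ => Complex.normSq_nonneg _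

private lemma eq_zero_of_trace_re {d e : Type*} [Fintype d] [Fintype e]
    (A : Matrix d e ℂ) (h : ((Aᴴ * A).trace).re = 0) : A = 0 := by
  rw [trace_re_eq_sum_normSq] at h
  ext i j
  have h1 := (Finset.sum_eq_zero_iff_of_nonneg
    (fun j _ => Finset.sum_nonneg fun i _ => Complex.normSq_nonneg _)).1 h j (Finset.mem_univ j)
  have h2 := (Finset.sum_eq_zero_iff_of_nonneg (fun i _ => Complex.normSq_nonneg _)).1 h1 i
    (Finset.mem_univ i)
  simpa using Complex.normSq_eq_zero.1 h2

private lemma psd_real_smul {d : Type*} [Fintype d] {A : Matrix d d ℂ} (hA : A.PosSemidef)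
    {r : ℝ} (hr : 0 ≤ r) : (((r : ℂ)) • A).PosSemidef := by
  refine ⟨?_, fun x => ?_⟩
  · rw [Matrix.IsHermitian, Matrix.conjTranspose_smul, hA.1]
    congr 1
    simp [Complex.star_def, Complex.conj_ofReal]
  · have h1 := hA.2 x
    exact (hA.smul (Complex.zero_le_real.2 hr)).2 x

open scoped MatrixOrder in
private lemma exists_herm_sqrt {d : Type*} [Fintype d] [DecidableEq d] {A : Matrix d d ℂ}
    (hA : A.PosSemidef) : ∃ s : Matrix d d ℂ, sᴴ = s ∧ s * s = A :=
  ⟨CFC.sqrt A, (CFC.sqrt_nonneg A).posSemidef.1, CFC.sqrt_mul_sqrt_self A hA.nonneg⟩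

/-- If the uniform ensemble over `n`-bit strings satisfies `∑_x p^B_{x|x} ≤ 2^b` for every
POVM, then `ξ(E) = n − H₂(ρ_AB|ρ) ≤ b`. -/
theorem concealing_bounds_xi {n : ℕ} {d : Type*} [Fintype d] [DecidableEq d] (b : ℝ)
    (ρ : (Fin n → Bool) → Matrix d d ℂ)
    (hρ : ∀ x, (ρ x).PosSemidef) (hρtr : ∀ x, (ρ x).trace = 1)
    (ρbar : Matrix d d ℂ) (hρbar : ρbar = ∑ x, ((2 : ℂ) ^ n)⁻¹ • ρ x)
    (hpd : ρbar.PosDef)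
    (R : Matrix d d ℂ) (hR : R.PosSemidef) (hRR : R * R = ρbar⁻¹)
    (ρAB : Matrix ((Fin n → Bool) × d) ((Fin n → Bool) × d) ℂ)
    (hρAB : ρAB = ∑ x, ((2 : ℂ) ^ n)⁻¹ • ((Matrix.single x x 1) ⊗ₖ ρ x))
    (hConcealing : ∀ M : (Fin n → Bool) → Matrix d d ℂ,
      (∀ x, (M x).PosSemidef) → (∑ x, M x = (1 : Matrix d d ℂ)) →
      ∑ x, ((M x * ρ x).trace).re ≤ (2 : ℝ) ^ b) :
    (n : ℝ) - (-Real.logb 2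
        ((((((1 : Matrix (Fin n → Bool) (Fin n → Bool) ℂ) ⊗ₖ R) * ρAB) *
            (((1 : Matrix (Fin n → Bool) (Fin n → Bool) ℂ) ⊗ₖ R) * ρAB)).trace).re))
      ≤ b := by
  -- d is nonempty
  have hd : Nonempty d := by
    rcases isEmpty_or_nonempty d with h | h
    · exfalso
      have := hρtr (fun _ => false)
      simp [Matrix.trace] at this
    · exact h
  set c : ℂ := ((2 : ℂ) ^ n)⁻¹ with hc
  set r : ℝ := ((2 : ℝ) ^ n)⁻¹ with hrdef
  have hcr : c = ((r : ℝ) : ℂ) := by rw [hc, hrdef]; push_cast; ring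
  have hrpos : 0 < r := by rw [hrdef]; positivity
  -- invertibility facts
  have hdet : IsUnit ρbar.det := (Matrix.isUnit_iff_isUnit_det _).1 hpd.isUnit
  have h1 : R * R * ρbar = 1 := by rw [hRR]; exact Matrix.nonsing_inv_mul _ hdet
  have h2 : ρbar * (R * R) = 1 := by rw [hRR]; exact Matrix.mul_nonsing_inv _ hdet
  have hcomm : ρbar * R = R * ρbar := by
    have hl : R * (R * ρbar) = 1 := by rw [← mul_assoc]; exact h1
    have hr' : (ρbar * R) * R = 1 := by rw [mul_assoc]; exact h2
    calc ρbar * R = (ρbar * R) * (R * (R * ρbar)) := by rw [hl, mul_one]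
      _ = ((ρbar * R) * R) * (R * ρbar) := by noncomm_ring
      _ = R * ρbar := by rw [hr', one_mul]
  have hRbarR : R * ρbar * R = 1 := by
    calc R * ρbar * R = (ρbar * R) * R := by rw [hcomm]
      _ = ρbar * (R * R) := by rw [mul_assoc]
      _ = 1 := h2
  -- the pretty good measurement
  set M : (Fin n → Bool) → Matrix d d ℂ := fun x => c • (R * ρ x * R) with hM
  have hMpsd : ∀ x, (M x).PosSemidef := by
    intro x
    have h0 : (Rᴴ * ρ x * R).PosSemidef := (hρ x).conjTranspose_mul_mul_same R
    rw [hR.1] at h0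
    have := psd_real_smul h0 hrpos.le
    show (c • (R * ρ x * R)).PosSemidef
    rwa [hcr]
  have hMsum : ∑ x, M x = 1 := by
    have hsum : ∑ x, M x = R * (∑ x, c • ρ x) * R := by
      rw [Finset.mul_sum, Finset.sum_mul]
      refine Finset.sum_congr rfl fun x _ => ?_
      rw [hM, mul_smul_comm, smul_mul_assoc]
    rw [hsum, ← hρbar, hRbarR]
  have hG := hConcealing M hMpsd hMsum
  -- rewrite guessing probability
  set t : (Fin n → Bool) → ℝ := fun x => ((R * ρ x * R * ρ x).trace).re with ht
  have hGt : ∑ x, r * t x ≤ (2 : ℝ) ^ b := by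
    refine le_trans (le_of_eq ?_) hG
    refine Finset.sum_congr rfl fun x _ => ?_
    rw [hM]
    simp only
    rw [smul_mul_assoc, Matrix.trace_smul, hcr, smul_eq_mul, Complex.re_ofReal_mul, ht]
  -- compute the trace
  set S : Matrix ((Fin n → Bool) × d) ((Fin n → Bool) × d) ℂ :=
    ((1 : Matrix (Fin n → Bool) (Fin n → Bool) ℂ) ⊗ₖ R) * ρAB with hS
  have hS1 : S = ∑ x, c • ((Matrix.single x x 1) ⊗ₖ (R * ρ x)) := by
    rw [hS, hρAB, Finset.mul_sum]
    refine Finset.sum_congr rfl fun x _ => ?_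
    rw [mul_smul_comm, ← Matrix.mul_kronecker_mul, Matrix.one_mul]
  have hSS : (S * S).trace = ∑ x, c ^ 2 * (R * ρ x * R * ρ x).trace := by
    rw [hS1, Finset.sum_mul_sum, Matrix.trace_sum]
    refine Finset.sum_congr rfl fun x _ => ?_
    rw [Matrix.trace_sum]
    rw [Finset.sum_eq_single_of_mem x (Finset.mem_univ x)]
    · rw [smul_mul_smul_comm, ← Matrix.mul_kronecker_mul, Matrix.trace_smul,
        Matrix.single_mul_single_same, Matrix.trace_kronecker]
      have htr1 : (Matrix.single x x ((1:ℂ) * 1)).trace = 1 := by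
        simp [Matrix.trace, Matrix.single, Matrix.diag]
      rw [htr1, one_mul, smul_eq_mul, ← sq]
      congr 1
      noncomm_ring
    · intro y _ hyx
      rw [smul_mul_smul_comm, ← Matrix.mul_kronecker_mul,
        Matrix.single_mul_single_of_ne (h := hyx.symm), Matrix.zero_kronecker, Matrix.trace_smul,
        Matrix.trace_zero, smul_zero]
  have hTre : ((S * S).trace).re = ∑ x, r ^ 2 * t x := by
    rw [hSS, Complex.re_sum]
    refine Finset.sum_congr rfl fun x _ => ?_
    rw [hcr, ht]
    rw [show ((r : ℝ) : ℂ) ^ 2 = (((r ^ 2 : ℝ)) : ℂ) by push_cast; ring]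
    rw [Complex.re_ofReal_mul]
  -- each t x is of the form re tr (AᴴA) with A = s R s
  have hkey : ∀ x, ∃ A : Matrix d d ℂ, Aᴴ = A ∧
      (R * ρ x * R * ρ x).trace = (Aᴴ * A).trace ∧
      (A = 0 → R * ρ x * R = 0) := by
    intro x
    obtain ⟨s, hsH, hss⟩ := exists_herm_sqrt (hρ x)
    obtain ⟨Rh, hRhH, hRhh⟩ := exists_herm_sqrt hR
    have hAH : (s * R * s)ᴴ = s * R * s := by
      rw [Matrix.conjTranspose_mul, Matrix.conjTranspose_mul, hsH, hR.1]
      rw [mul_assoc]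
    refine ⟨s * R * s, hAH, ?_, ?_⟩
    · have e1 : (s * R * s)ᴴ * (s * R * s) = s * (R * s * s * R * s) := by
        rw [hAH]; noncomm_ring
      have e2 : R * ρ x * R * ρ x = (R * s * s * R * s) * s := by
        rw [← hss]; noncomm_ring
      rw [e2, Matrix.trace_mul_comm, e1]
    · intro hA0
      have hu : Rh * s = 0 := by
        apply eq_zero_of_trace_re
        have : (Rh * s)ᴴ * (Rh * s) = s * R * s := by
          rw [Matrix.conjTranspose_mul, hsH, hRhH]
          calc s * Rh * (Rh * s) = s * (Rh * Rh) * s := by noncomm_ring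
            _ = s * R * s := by rw [hRhh]
        rw [this, hA0]
        simp
      have : R * ρ x * R = Rh * ((Rh * s) * (Rh * s)ᴴ) * Rh := by
        rw [Matrix.conjTranspose_mul, hsH, hRhH, ← hss, ← hRhh]
        noncomm_ring
      rw [this, hu]
      simp
  have htnn : ∀ x, 0 ≤ t x := by
    intro x
    obtain ⟨A, -, hA1, -⟩ := hkey x
    rw [ht]; simp only
    rw [hA1]
    exact trace_re_nonneg A
  -- positivity of the collision term
  have hTpos : 0 < ((S * S).trace).re := by
    rw [hTre]
    rcases lt_or_eq_of_le (Finset.sum_nonneg fun x _ =>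
      mul_nonneg (pow_pos hrpos 2).le (htnn x)) with h | h
    · exact h
    exfalso
    have hall : ∀ x, t x = 0 := by
      intro x
      have := (Finset.sum_eq_zero_iff_of_nonneg fun x _ =>
        mul_nonneg (pow_pos hrpos 2).le (htnn x)).1 h.symm x (Finset.mem_univ x)
      have hr2 : (0:ℝ) < r ^ 2 := by positivity
      exact by nlinarith [this]
    have hzero : ∀ x, R * ρ x * R = 0 := by
      intro x
      obtain ⟨A, hAH, hA1, hA2⟩ := hkey x
      apply hA2
      apply eq_zero_of_trace_re
      rw [← hA1]
      exact hall x
    have h10 : (1 : Matrix d d ℂ) = 0 := by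
      rw [← hMsum]
      apply Finset.sum_eq_zero
      intro x _
      rw [hM]
      simp only
      rw [hzero x, smul_zero]
    have := congrFun (congrFun h10 (Classical.arbitrary d)) (Classical.arbitrary d)
    simp [Matrix.one_apply] at this
  -- final log computation
  have hTle : ((S * S).trace).re ≤ r * (2 : ℝ) ^ b := by
    rw [hTre]
    calc ∑ x, r ^ 2 * t x = r * ∑ x, r * t x := by
          rw [Finset.mul_sum]; refine Finset.sum_congr rfl fun x _ => by ring
      _ ≤ r * (2 : ℝ) ^ b := mul_le_mul_of_nonneg_left hGt hrpos.le
  have hr2b : r * (2 : ℝ) ^ b = (2 : ℝ) ^ (b - (n : ℝ)) := by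
    rw [Real.rpow_sub (by norm_num : (0:ℝ) < 2), hrdef]
    rw [← Real.rpow_natCast (2:ℝ) n]
    ring
  have hlog : Real.logb 2 (((S * S).trace).re) ≤ b - (n : ℝ) := by
    calc Real.logb 2 (((S * S).trace).re) ≤ Real.logb 2 (r * (2 : ℝ) ^ b) :=
          Real.logb_le_logb_of_le (by norm_num) hTpos hTle
      _ = b - (n : ℝ) := by rw [hr2b, Real.logb_rpow (by norm_num) (by norm_num)]
  linarith
end

section
/- Let a, b, n be real numbers and suppose that for all γ > 4, 2^a ≥ 2^{n−b−γ}(1 − 2^{−γ/4+1}). Then a + b + c ≥ n with c = 5log₂5 − 4. Moreover, the function δ(γ) = γ − log₂(1 − 2^{−γ/4+1}) on (4, ∞) attains its minimum value 5log₂5 − 4 at γ = 4(log₂5 − 1). -/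
/-- If `2^a ≥ 2^{n−b−γ}(1 − 2^{−γ/4+1})` for all `γ > 4`, then `a + b + c ≥ n` with
`c = 5log₂5 − 4`. Moreover `δ(γ) = γ − log₂(1 − 2^{−γ/4+1})` attains its minimum
`5log₂5 − 4` on `(4, ∞)` at `γ = 4(log₂5 − 1)`. -/
theorem tradeoff_constant (a b n : ℝ)
    (h : ∀ γ : ℝ, 4 < γ →
      (2 : ℝ) ^ (n - b - γ) * (1 - (2 : ℝ) ^ (-γ / 4 + 1)) ≤ (2 : ℝ) ^ a) :
    n ≤ a + b + (5 * Real.logb 2 5 - 4) ∧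
    (∀ γ : ℝ, 4 < γ →
      5 * Real.logb 2 5 - 4 ≤ γ - Real.logb 2 (1 - (2 : ℝ) ^ (-γ / 4 + 1))) ∧
    (4 * (Real.logb 2 5 - 1)) -
        Real.logb 2 (1 - (2 : ℝ) ^ (-(4 * (Real.logb 2 5 - 1)) / 4 + 1))
      = 5 * Real.logb 2 5 - 4 := by
  have two_pos : (0:ℝ) < 2 := by norm_num
  set L := Real.logb 2 5 with hLdef
  have hL : (2:ℝ) ^ L = 5 := Real.rpow_logb two_pos (by norm_num) (by norm_num)
  have h22 : (2:ℝ) ^ (2:ℝ) = 4 := by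
    rw [show ((2:ℝ):ℝ) = ((2:ℕ):ℝ) by norm_num, Real.rpow_natCast]; norm_num
  have hL2 : (2:ℝ) < L := by
    have : Real.logb 2 4 < Real.logb 2 5 :=
      Real.logb_lt_logb (by norm_num) (by norm_num) (by norm_num)
    have h4 : Real.logb 2 4 = 2 := by
      rw [show (4:ℝ) = (2:ℝ)^(2:ℝ) from h22.symm]
      exact Real.logb_rpow (b := 2) (by norm_num) (by norm_num)
    linarith
  -- value at γ₀
  have hexp : (-(4 * (L - 1)) / 4 + 1) = 2 - L := by ring
  have h45 : (2:ℝ) ^ ((2:ℝ) - L) = 4/5 := by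
    rw [Real.rpow_sub two_pos, hL, h22]
  have hval : (1 : ℝ) - (2:ℝ) ^ (-(4 * (L - 1)) / 4 + 1) = 1/5 := by
    rw [hexp, h45]; norm_num
  have heq : (4 * (L - 1)) - Real.logb 2 (1 - (2:ℝ) ^ (-(4 * (L - 1)) / 4 + 1))
      = 5 * L - 4 := by
    rw [hval, show (1/5 : ℝ) = 5⁻¹ by norm_num, Real.logb_inv]
    show 4 * (L - 1) - -L = 5 * L - 4
    ring
  -- main inequality
  have key : ∀ γ : ℝ, 4 < γ →
      5 * L - 4 ≤ γ - Real.logb 2 (1 - (2:ℝ) ^ (-γ / 4 + 1)) := by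
    intro γ hγ
    set t := (2:ℝ) ^ (-γ/4) with htdef
    have ht0 : 0 < t := Real.rpow_pos_of_pos two_pos _
    have ht2 : t < 1/2 := by
      have h1 : (2:ℝ) ^ (-γ/4) < (2:ℝ) ^ (-1:ℝ) :=
        Real.rpow_lt_rpow_left_iff (by norm_num) |>.mpr (by linarith)
      have h2 : (2:ℝ) ^ (-1:ℝ) = 1/2 := by
        rw [Real.rpow_neg_one]; norm_num
      rw [h2] at h1; exact h1
    have h2t : (2:ℝ) ^ (-γ/4 + 1) = 2 * t := by
      rw [Real.rpow_add two_pos, Real.rpow_one]; ring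
    have hpos : (0:ℝ) < 1 - 2*t := by linarith
    have ht4 : t^(4:ℕ) = (2:ℝ) ^ (-γ) := by
      rw [htdef, ← Real.rpow_natCast ((2:ℝ)^(-γ/4)) 4, ← Real.rpow_mul (by norm_num)]
      norm_num
    have h2γ : (2:ℝ) ^ γ * t^(4:ℕ) = 1 := by
      rw [ht4, ← Real.rpow_add two_pos]; simp
    have hpoly : 3125 * (t^(4:ℕ) * (1 - 2*t)) ≤ 16 := by
      nlinarith [mul_nonneg (sq_nonneg (5*t-2))
        (by positivity : (0:ℝ) ≤ 250*t^3 + 75*t^2 + 20*t + 4)]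
    have hrγ : (0:ℝ) < (2:ℝ) ^ γ := Real.rpow_pos_of_pos two_pos _
    have hbound : 1 - 2*t ≤ (2:ℝ)^γ * 16 / 3125 := by
      nlinarith [mul_le_mul_of_nonneg_left hpoly hrγ.le]
    have hr : (2:ℝ) ^ (γ + 4 - 5*L) = (2:ℝ)^γ * 16 / 3125 := by
      rw [Real.rpow_sub two_pos, Real.rpow_add two_pos,
        show (5:ℝ)*L = L*5 by ring, Real.rpow_mul two_pos.le, hL,
        show ((4:ℝ):ℝ) = ((4:ℕ):ℝ) by norm_num, Real.rpow_natCast,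
        show ((5:ℝ):ℝ) = ((5:ℕ):ℝ) by norm_num, Real.rpow_natCast]
      norm_num
    have hlog : Real.logb 2 (1 - 2*t) ≤ γ + 4 - 5*L := by
      rw [Real.logb_le_iff_le_rpow (by norm_num) hpos, hr]
      exact hbound
    rw [h2t]
    linarith
  refine ⟨?_, key, heq⟩
  -- part 1: plug γ₀
  have hγ0 : (4:ℝ) < 4 * (L - 1) := by linarith
  have h1 := h (4 * (L - 1)) hγ0
  rw [hval] at h1
  have h15 : (2:ℝ) ^ (n - b - 4*(L-1) - L) = (2:ℝ) ^ (n - b - 4*(L-1)) * (1/5) := by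
    rw [show n - b - 4*(L-1) - L = (n - b - 4*(L-1)) + (-L) by ring,
      Real.rpow_add two_pos, Real.rpow_neg two_pos.le, hL]
    norm_num
  rw [← h15] at h1
  have := (Real.rpow_le_rpow_left_iff (x := (2:ℝ)) (by norm_num)).mp h1
  linarith
end
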